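/- For the space-inhomogeneous half-plane model of the context, the following identity holds in R[[t]]: (x²y² − t²(x+y)²(1+xy)² − t·x·(1+x²)·y·(1+y²))·F_1 = t·x·y·(x+y)·(1+xy) − t·x·y²·F_0(0,y) − t·y·(x·(1+y²) + t·(x+y)·(1+xy))·F_1(0,y), where for G ∈ R[[t]], G(0,y) denotes the series obtained by setting x = 0 in every t-coefficient of G. -/

import Mathlib

open LaurentPolynomial Polynomial

noncomputable def phi0 : Polynomial (LaurentPolynomial ℚ) →+* Polynomial (LaurentPolynomial ℚ) :=
  ((Polynomial.C : LaurentPolynomial ℚ →+* Polynomial (LaurentPolynomial ℚ)).comp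
        (Polynomial.evalRingHom (0 : LaurentPolynomial ℚ)))

lemma phi0_apply (p : Polynomial (LaurentPolynomial ℚ)) : phi0 p = Polynomial.C (p.coeff 0) := by
  simp [phi0, Polynomial.coeff_zero_eq_eval_zero]

private lemma lp_T_mul_app (k j : ℤ) (q : LaurentPolynomial ℚ) :
    AddMonoidAlgebra.coeff (T k * q : LaurentPolynomial ℚ) j = AddMonoidAlgebra.coeff q (j - k) := by
  rw [T, AddMonoidAlgebra.coeff_single_mul_apply, one_mul, neg_add_eq_sub]

private lemma lp_L2 (q : LaurentPolynomial ℚ) (j : ℤ) :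
    AddMonoidAlgebra.coeff ((1 + T 1 * T 1) * q : LaurentPolynomial ℚ) j = AddMonoidAlgebra.coeff q j + AddMonoidAlgebra.coeff q (j - 2) := by
  have : (T 1 * T 1 : LaurentPolynomial ℚ) = T 2 := by rw [← T_add]; norm_num
  rw [this, add_mul, one_mul, AddMonoidAlgebra.coeff_add, Finsupp.add_apply, lp_T_mul_app]


private lemma lp_add_apply (p q : LaurentPolynomial ℚ) (j : ℤ) :
    AddMonoidAlgebra.coeff (p + q : LaurentPolynomial ℚ) j = AddMonoidAlgebra.coeff p j + AddMonoidAlgebra.coeff q j := by rw [AddMonoidAlgebra.coeff_add, Finsupp.add_apply]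

private lemma lp_sub_apply (p q : LaurentPolynomial ℚ) (j : ℤ) :
    AddMonoidAlgebra.coeff (p - q : LaurentPolynomial ℚ) j = AddMonoidAlgebra.coeff p j - AddMonoidAlgebra.coeff q j := by rw [AddMonoidAlgebra.coeff_sub, Finsupp.sub_apply]

private lemma lp_zero_apply (j : ℤ) : AddMonoidAlgebra.coeff (0 : LaurentPolynomial ℚ) j = 0 := rfl


private lemma lp_mul_T_app (k j : ℤ) (q : LaurentPolynomial ℚ) :
    AddMonoidAlgebra.coeff (q * T k : LaurentPolynomial ℚ) j = AddMonoidAlgebra.coeff q (j - k) := by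
  rw [T, AddMonoidAlgebra.coeff_mul_single_apply, mul_one, ← sub_eq_add_neg]

private lemma lp_L2' (q : LaurentPolynomial ℚ) (j : ℤ) :
    AddMonoidAlgebra.coeff (q * (1 + T 1 * T 1) : LaurentPolynomial ℚ) j = AddMonoidAlgebra.coeff q j + AddMonoidAlgebra.coeff q (j - 2) := by
  rw [mul_comm, lp_L2]

private lemma coeff_helper (a b c : LaurentPolynomial ℚ) (p : Polynomial (LaurentPolynomial ℚ)) :
    ∀ i : ℕ, ((Polynomial.C a + Polynomial.X * (Polynomial.C b + Polynomial.X * Polynomial.C c)) * p).coeff i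
      = a * p.coeff i + (if i = 0 then 0 else b * p.coeff (i - 1))
        + (if i ≤ 1 then 0 else c * p.coeff (i - 2))
  | 0 => by simp [add_mul, mul_assoc]
  | 1 => by simp [add_mul, mul_assoc, Polynomial.coeff_X_mul]
  | (k+2) => by
      simp only [add_mul, Polynomial.coeff_add, Polynomial.coeff_C_mul, mul_assoc,
        Polynomial.coeff_X_mul]
      simp [Polynomial.coeff_C_mul, add_assoc]

private lemma P0lem (f : ℤ → ℤ → ℕ → ℚ)
    (hf0 : ∀ i j : ℤ, 0 ≤ i → f i j 0 = if i = 0 ∧ j = 0 then 1 else 0)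
    (FF : Fin 2 → PowerSeries (Polynomial (LaurentPolynomial ℚ)))
    (hFF : ∀ (r : Fin 2) (n : ℕ) (i : ℕ) (j : ℤ),
      (AddMonoidAlgebra.coeff ((PowerSeries.coeff n (FF r)).coeff i)) j =
        if ((i : ℤ) + j) % 2 = ((r : ℕ) : ℤ) then f i j n else 0) :
    PowerSeries.coeff 0 (FF 0) = 1 := by
  apply Polynomial.ext; intro i
  apply LaurentPolynomial.ext; intro j
  rw [hFF 0 0 i j, hf0 i j (Int.natCast_nonneg i)]
  have h1 : (1 : Polynomial (LaurentPolynomial ℚ)).coeff i = if i = 0 then 1 else 0 := by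
    simp [Polynomial.coeff_one]
  rw [h1]
  have one_app : AddMonoidAlgebra.coeff (1 : LaurentPolynomial ℚ) j = if 0 = j then 1 else 0 := by
    rw [← LaurentPolynomial.T_zero, LaurentPolynomial.T_apply]
  split_ifs with h1 h2 h3 <;>
    simp_all [one_app, Finsupp.zero_apply] <;>
    first
    | omega
    | rw [if_neg (by omega)]

private lemma Q0lem (f : ℤ → ℤ → ℕ → ℚ)
    (hf0 : ∀ i j : ℤ, 0 ≤ i → f i j 0 = if i = 0 ∧ j = 0 then 1 else 0)
    (FF : Fin 2 → PowerSeries (Polynomial (LaurentPolynomial ℚ)))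
    (hFF : ∀ (r : Fin 2) (n : ℕ) (i : ℕ) (j : ℤ),
      (AddMonoidAlgebra.coeff ((PowerSeries.coeff n (FF r)).coeff i)) j =
        if ((i : ℤ) + j) % 2 = ((r : ℕ) : ℤ) then f i j n else 0) :
    PowerSeries.coeff 0 (FF 1) = 0 := by
  apply Polynomial.ext; intro i
  apply LaurentPolynomial.ext; intro j
  rw [hFF 1 0 i j, hf0 i j (Int.natCast_nonneg i)]
  split_ifs with h1 h2 <;> simp_all [Finsupp.zero_apply] <;> try omega

private lemma E0lem (f : ℤ → ℤ → ℕ → ℚ)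
    (hf0 : ∀ i j : ℤ, 0 ≤ i → f i j 0 = if i = 0 ∧ j = 0 then 1 else 0)
    (hfneg : ∀ i j n, i < 0 → f i j n = 0)
    (hrec : ∀ (i j : ℤ) (n : ℕ), 0 ≤ i →
      f i j (n+1) = f (i-1) j n + f (i+1) j n + f i (j-1) n + f i (j+1) n
        + (if (i+j) % 2 = 0 then 0
            else f (i-1) (j-1) n + f (i-1) (j+1) n + f (i+1) (j-1) n + f (i+1) (j+1) n))
    (FF : Fin 2 → PowerSeries (Polynomial (LaurentPolynomial ℚ)))
    (hFF : ∀ (r : Fin 2) (n : ℕ) (i : ℕ) (j : ℤ),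
      (AddMonoidAlgebra.coeff ((PowerSeries.coeff n (FF r)).coeff i)) j =
        if ((i : ℤ) + j) % 2 = ((r : ℕ) : ℤ) then f i j n else 0) :
    PowerSeries.C (Polynomial.C (0 : LaurentPolynomial ℚ)
        + Polynomial.X * (Polynomial.C (T 1) + Polynomial.X * Polynomial.C 0)) * FF 0
      = PowerSeries.C (Polynomial.C (0 : LaurentPolynomial ℚ)
          + Polynomial.X * (Polynomial.C (T 1) + Polynomial.X * Polynomial.C 0))
        + PowerSeries.X *
          (PowerSeries.C (Polynomial.C (T 1)
              + Polynomial.X * (Polynomial.C (1 + T 1 * T 1) + Polynomial.X * Polynomial.C (T 1))) * FF 1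
            - PowerSeries.C (Polynomial.C (T 1)) * PowerSeries.map phi0 (FF 1)) := by
  apply PowerSeries.ext; intro n
  have cadd : ∀ (k : ℕ) (A B : PowerSeries (Polynomial (LaurentPolynomial ℚ))),
      PowerSeries.coeff k (A + B) = PowerSeries.coeff k A + PowerSeries.coeff k B :=
    fun k A B => map_add _ A B
  have csub : ∀ (k : ℕ) (A B : PowerSeries (Polynomial (LaurentPolynomial ℚ))),
      PowerSeries.coeff k (A - B) = PowerSeries.coeff k A - PowerSeries.coeff k B :=
    fun k A B => map_sub _ A B
  rw [PowerSeries.coeff_C_mul, cadd]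
  cases n with
  | zero =>
    rw [PowerSeries.coeff_zero_X_mul, PowerSeries.coeff_zero_C, P0lem f hf0 FF hFF, mul_one,
      add_zero]
  | succ m =>
    rw [PowerSeries.coeff_C, if_neg (Nat.succ_ne_zero m), PowerSeries.coeff_succ_X_mul, zero_add,
      csub, PowerSeries.coeff_C_mul, PowerSeries.coeff_C_mul, PowerSeries.coeff_map, phi0_apply]
    apply Polynomial.ext; intro i
    rw [Polynomial.coeff_sub, coeff_helper, coeff_helper, Polynomial.coeff_C_mul,
      Polynomial.coeff_C]
    apply LaurentPolynomial.ext; intro j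
    simp only [zero_mul, add_zero, zero_add, mul_ite, mul_zero,
      Finsupp.sub_apply, Finsupp.add_apply, apply_ite (fun q : LaurentPolynomial ℚ => AddMonoidAlgebra.coeff q j),
      lp_add_apply, lp_sub_apply, lp_zero_apply, lp_T_mul_app, lp_L2, hFF,
      Fin.isValue, Fin.val_zero, Fin.val_one, Nat.cast_zero, Nat.cast_one]
    rcases i with _ | (_ | k)
    · simp
    · norm_num
      split_ifs <;>
        first
        | (exfalso; omega)
        | (rw [hrec 0 (j-1) m le_rfl, if_pos (by omega)]
           norm_num [hfneg]
           try ring)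
        | norm_num
    · norm_num
      push_cast
      split_ifs <;>
        first
        | (exfalso; omega)
        | (rw [hrec ((k:ℤ)+1) (j-1) m (by omega), if_pos (by omega)]
           simp only [show ((k:ℤ)+1)-1 = (k:ℤ) from by ring,
             show ((k:ℤ)+1)+1 = (k:ℤ)+2 from by ring]
           ring)
        | norm_num

private lemma E1lem (f : ℤ → ℤ → ℕ → ℚ)
    (hf0 : ∀ i j : ℤ, 0 ≤ i → f i j 0 = if i = 0 ∧ j = 0 then 1 else 0)
    (hfneg : ∀ i j n, i < 0 → f i j n = 0)
    (hrec : ∀ (i j : ℤ) (n : ℕ), 0 ≤ i →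
      f i j (n+1) = f (i-1) j n + f (i+1) j n + f i (j-1) n + f i (j+1) n
        + (if (i+j) % 2 = 0 then 0
            else f (i-1) (j-1) n + f (i-1) (j+1) n + f (i+1) (j-1) n + f (i+1) (j+1) n))
    (FF : Fin 2 → PowerSeries (Polynomial (LaurentPolynomial ℚ)))
    (hFF : ∀ (r : Fin 2) (n : ℕ) (i : ℕ) (j : ℤ),
      (AddMonoidAlgebra.coeff ((PowerSeries.coeff n (FF r)).coeff i)) j =
        if ((i : ℤ) + j) % 2 = ((r : ℕ) : ℤ) then f i j n else 0) :
    PowerSeries.C (Polynomial.C (0 : LaurentPolynomial ℚ)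
        + Polynomial.X * (Polynomial.C (T 1) + Polynomial.X * Polynomial.C 0)) * FF 1
      = PowerSeries.X *
          (PowerSeries.C (Polynomial.C (T 1)
              + Polynomial.X * (Polynomial.C (1 + T 1 * T 1) + Polynomial.X * Polynomial.C (T 1))) * FF 0
            - PowerSeries.C (Polynomial.C (T 1)) * PowerSeries.map phi0 (FF 0)
            + PowerSeries.C (Polynomial.C (1 + T 1 * T 1)
                + Polynomial.X * (Polynomial.C 0 + Polynomial.X * Polynomial.C (1 + T 1 * T 1))) * FF 1
            - PowerSeries.C (Polynomial.C (1 + T 1 * T 1)) * PowerSeries.map phi0 (FF 1)) := by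
  apply PowerSeries.ext; intro n
  have cadd : ∀ (k : ℕ) (A B : PowerSeries (Polynomial (LaurentPolynomial ℚ))),
      PowerSeries.coeff k (A + B) = PowerSeries.coeff k A + PowerSeries.coeff k B :=
    fun k A B => map_add _ A B
  have csub : ∀ (k : ℕ) (A B : PowerSeries (Polynomial (LaurentPolynomial ℚ))),
      PowerSeries.coeff k (A - B) = PowerSeries.coeff k A - PowerSeries.coeff k B :=
    fun k A B => map_sub _ A B
  rw [PowerSeries.coeff_C_mul]
  cases n with
  | zero =>
    rw [PowerSeries.coeff_zero_X_mul, Q0lem f hf0 FF hFF, mul_zero]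
  | succ m =>
    rw [PowerSeries.coeff_succ_X_mul, csub, cadd, csub,
      PowerSeries.coeff_C_mul, PowerSeries.coeff_C_mul, PowerSeries.coeff_C_mul,
      PowerSeries.coeff_C_mul, PowerSeries.coeff_map, PowerSeries.coeff_map,
      phi0_apply, phi0_apply]
    apply Polynomial.ext; intro i
    rw [Polynomial.coeff_sub, Polynomial.coeff_add, Polynomial.coeff_sub,
      coeff_helper, coeff_helper, coeff_helper, Polynomial.coeff_C_mul,
      Polynomial.coeff_C_mul, Polynomial.coeff_C, Polynomial.coeff_C]
    apply LaurentPolynomial.ext; intro j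
    simp only [zero_mul, add_zero, zero_add, mul_ite, mul_zero,
      lp_add_apply, lp_sub_apply, lp_zero_apply, lp_T_mul_app, lp_L2, hFF,
      Fin.isValue, Fin.val_zero, Fin.val_one, Nat.cast_zero, Nat.cast_one]
    simp only [apply_ite (fun q : LaurentPolynomial ℚ => AddMonoidAlgebra.coeff q j), lp_T_mul_app, lp_mul_T_app,
      lp_L2, lp_L2', lp_zero_apply, hFF, Fin.isValue, Fin.val_zero, Fin.val_one,
      Nat.cast_zero, Nat.cast_one]
    rcases i with _ | (_ | k)
    · simp
    · push_cast
      simp only [show ((0 + (j-1)) % 2 = 1) ↔ (j % 2 = 0) from by omega,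
        show ((1 + (j-1)) % 2 = 0) ↔ (j % 2 = 0) from by omega,
        show ((0 + j) % 2 = 0) ↔ (j % 2 = 0) from by omega,
        show ((0 + (j-2)) % 2 = 0) ↔ (j % 2 = 0) from by omega,
        show ((1 + j) % 2 = 1) ↔ (j % 2 = 0) from by omega,
        show ((1 + (j-2)) % 2 = 1) ↔ (j % 2 = 0) from by omega]
      split_ifs with hj
      · rw [hrec 0 (j-1) m le_rfl, if_neg (by omega)]
        norm_num [hfneg]
        try ring
      · norm_num
    · push_cast
      simp only [show (((k:ℤ) + 1 + (j - 1)) % 2 = 1) ↔ (((k:ℤ) + j) % 2 = 1) from by omega,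
        show (((k:ℤ)+1+1+(j-1)) % 2 = 0) ↔ (((k:ℤ) + j) % 2 = 1) from by omega,
        show (((k:ℤ)+1+j) % 2 = 0) ↔ (((k:ℤ) + j) % 2 = 1) from by omega,
        show (((k:ℤ)+1+(j-2)) % 2 = 0) ↔ (((k:ℤ) + j) % 2 = 1) from by omega,
        show (((k:ℤ)+(j-1)) % 2 = 0) ↔ (((k:ℤ) + j) % 2 = 1) from by omega,
        show (((k:ℤ)+1+1+j) % 2 = 1) ↔ (((k:ℤ) + j) % 2 = 1) from by omega,
        show (((k:ℤ)+1+1+(j-2)) % 2 = 1) ↔ (((k:ℤ) + j) % 2 = 1) from by omega,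
        show (((k:ℤ)+(j-2)) % 2 = 1) ↔ (((k:ℤ) + j) % 2 = 1) from by omega]
      split_ifs with hk
      · rw [hrec ((k:ℤ)+1) (j-1) m (by omega), if_neg (by omega)]
        simp only [show ((k:ℤ)+1-1 : ℤ) = (k:ℤ) from by ring]
        norm_num [hfneg]
        try ring
      · norm_num


private lemma ite_step_odd (f : ℤ → ℤ → ℕ → ℚ) (hfneg : ∀ i j n, i < 0 → f i j n = 0)
    (S0 S1 : Finset (ℤ × ℤ)) (u v : ℤ) (h0 : (u,v) ∈ S0) (h1 : (u,v) ∈ S1)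
    (n : ℕ) (i j : ℤ) :
    (if 0 ≤ i ∧ (u,v) ∈ (if (i + j) % 2 = 0 then S0 else S1) then f i j n else 0)
      = f i j n := by
  have mem : (u,v) ∈ (if (i + j) % 2 = 0 then S0 else S1) := by split_ifs <;> assumption
  by_cases hi : 0 ≤ i
  · rw [if_pos ⟨hi, mem⟩]
  · rw [if_neg (by tauto), hfneg i j n (by omega)]

private lemma ite_step_diag (f : ℤ → ℤ → ℕ → ℚ) (hfneg : ∀ i j n, i < 0 → f i j n = 0)
    (S0 S1 : Finset (ℤ × ℤ)) (u v : ℤ) (h0 : (u,v) ∉ S0) (h1 : (u,v) ∈ S1)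
    (n : ℕ) (i j : ℤ) :
    (if 0 ≤ i ∧ (u,v) ∈ (if (i + j) % 2 = 0 then S0 else S1) then f i j n else 0)
      = if (i + j) % 2 = 0 then 0 else f i j n := by
  by_cases hp : (i + j) % 2 = 0
  · rw [if_pos hp, if_pos hp, if_neg (by tauto)]
  · rw [if_neg hp, if_neg hp]
    by_cases hi : 0 ≤ i
    · rw [if_pos ⟨hi, h1⟩]
    · rw [if_neg (by tauto), hfneg i j n (by omega)]

private lemma rec2 (S0 : Finset (ℤ × ℤ)) (hS0 : S0 = {(1,0), (-1,0), (0,1), (0,-1)})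
    (S1 : Finset (ℤ × ℤ))
    (hS1 : S1 = {(1,0), (-1,0), (0,1), (0,-1), (1,1), (1,-1), (-1,1), (-1,-1)})
    (f : ℤ → ℤ → ℕ → ℚ)
    (hfneg : ∀ i j n, i < 0 → f i j n = 0)
    (hfrec : ∀ (i j : ℤ) (n : ℕ), 0 ≤ i →
      f i j (n + 1) = ∑ st ∈ S1,
        if 0 ≤ i - st.1 ∧ st ∈ (if (i - st.1 + (j - st.2)) % 2 = 0 then S0 else S1)
          then f (i - st.1) (j - st.2) n else 0) :
    ∀ (i j : ℤ) (n : ℕ), 0 ≤ i →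
      f i j (n+1) = f (i-1) j n + f (i+1) j n + f i (j-1) n + f i (j+1) n
        + (if (i+j) % 2 = 0 then 0
            else f (i-1) (j-1) n + f (i-1) (j+1) n + f (i+1) (j-1) n + f (i+1) (j+1) n) := by
  intro i j n hi
  rw [hfrec i j n hi]
  subst hS1
  rw [show ({(1,0), (-1,0), (0,1), (0,-1), (1,1), (1,-1), (-1,1), (-1,-1)} : Finset (ℤ × ℤ))
      = insert (1,0) (insert (-1,0) (insert (0,1) (insert (0,-1) (insert (1,1)
          (insert (1,-1) (insert (-1,1) {(-1,-1)})))))) from rfl]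
  rw [Finset.sum_insert (by decide), Finset.sum_insert (by decide),
    Finset.sum_insert (by decide), Finset.sum_insert (by decide),
    Finset.sum_insert (by decide), Finset.sum_insert (by decide),
    Finset.sum_insert (by decide), Finset.sum_singleton]
  have L : ({(1,0), (-1,0), (0,1), (0,-1), (1,1), (1,-1), (-1,1), (-1,-1)} : Finset (ℤ × ℤ))
      = {(1,0), (-1,0), (0,1), (0,-1), (1,1), (1,-1), (-1,1), (-1,-1)} := rfl
  have h10 := ite_step_odd f hfneg S0 {(1,0), (-1,0), (0,1), (0,-1), (1,1), (1,-1), (-1,1), (-1,-1)} 1 0 (by rw [hS0]; decide) (by decide)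
  have hm10 := ite_step_odd f hfneg S0 {(1,0), (-1,0), (0,1), (0,-1), (1,1), (1,-1), (-1,1), (-1,-1)} (-1) 0 (by rw [hS0]; decide) (by decide)
  have h01 := ite_step_odd f hfneg S0 {(1,0), (-1,0), (0,1), (0,-1), (1,1), (1,-1), (-1,1), (-1,-1)} 0 1 (by rw [hS0]; decide) (by decide)
  have h0m1 := ite_step_odd f hfneg S0 {(1,0), (-1,0), (0,1), (0,-1), (1,1), (1,-1), (-1,1), (-1,-1)} 0 (-1) (by rw [hS0]; decide) (by decide)
  have h11 := ite_step_diag f hfneg S0 {(1,0), (-1,0), (0,1), (0,-1), (1,1), (1,-1), (-1,1), (-1,-1)} 1 1 (by rw [hS0]; decide) (by decide)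
  have h1m1 := ite_step_diag f hfneg S0 {(1,0), (-1,0), (0,1), (0,-1), (1,1), (1,-1), (-1,1), (-1,-1)} 1 (-1) (by rw [hS0]; decide) (by decide)
  have hm11 := ite_step_diag f hfneg S0 {(1,0), (-1,0), (0,1), (0,-1), (1,1), (1,-1), (-1,1), (-1,-1)} (-1) 1 (by rw [hS0]; decide) (by decide)
  have hm1m1 := ite_step_diag f hfneg S0 {(1,0), (-1,0), (0,1), (0,-1), (1,1), (1,-1), (-1,1), (-1,-1)} (-1) (-1) (by rw [hS0]; decide) (by decide)
  dsimp only
  simp only [sub_zero, sub_neg_eq_add]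
  rw [h10 n (i-1) j, hm10 n (i+1) j, h01 n i (j-1), h0m1 n i (j+1), h11 n (i-1) (j-1),
    h1m1 n (i-1) (j+1), hm11 n (i+1) (j-1), hm1m1 n (i+1) (j+1)]
  simp only [show ((i-1)+(j-1)) % 2 = (i+j) % 2 from by omega,
    show ((i-1)+(j+1)) % 2 = (i+j) % 2 from by omega,
    show ((i+1)+(j-1)) % 2 = (i+j) % 2 from by omega,
    show ((i+1)+(j+1)) % 2 = (i+j) % 2 from by omega]
  split_ifs with h <;> ring


theorem halfplane_space_inhomogeneous_kernel_equation
    (S0 : Finset (ℤ × ℤ)) (hS0 : S0 = {(1,0), (-1,0), (0,1), (0,-1)})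
    (S1 : Finset (ℤ × ℤ))
    (hS1 : S1 = {(1,0), (-1,0), (0,1), (0,-1), (1,1), (1,-1), (-1,1), (-1,-1)})
    (f : ℤ → ℤ → ℕ → ℚ)
    (hfneg : ∀ i j n, i < 0 → f i j n = 0)
    (hf0 : ∀ i j : ℤ, 0 ≤ i → f i j 0 = if i = 0 ∧ j = 0 then 1 else 0)
    (hfrec : ∀ (i j : ℤ) (n : ℕ), 0 ≤ i →
      f i j (n + 1) = ∑ st ∈ S1,
        if 0 ≤ i - st.1 ∧ st ∈ (if (i - st.1 + (j - st.2)) % 2 = 0 then S0 else S1)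
          then f (i - st.1) (j - st.2) n else 0)
    (FF : Fin 2 → PowerSeries (Polynomial (LaurentPolynomial ℚ)))
    (hFF : ∀ (r : Fin 2) (n : ℕ) (i : ℕ) (j : ℤ),
      (AddMonoidAlgebra.coeff ((PowerSeries.coeff n (FF r)).coeff i)) j =
        if ((i : ℤ) + j) % 2 = ((r : ℕ) : ℤ) then f i j n else 0)
    -- abbreviations: x, y, t as elements of R[[t]], and the "set x = 0" operation
    (x y t : PowerSeries (Polynomial (LaurentPolynomial ℚ)))
    (hx : x = PowerSeries.C Polynomial.X)
    (hy : y = PowerSeries.C (Polynomial.C (LaurentPolynomial.T 1)))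
    (ht : t = PowerSeries.X)
    (ev0 : PowerSeries (Polynomial (LaurentPolynomial ℚ)) →+*
           PowerSeries (Polynomial (LaurentPolynomial ℚ)))
    (hev0 : ev0 = PowerSeries.map
      ((Polynomial.C : LaurentPolynomial ℚ →+* Polynomial (LaurentPolynomial ℚ)).comp
        (Polynomial.evalRingHom (0 : LaurentPolynomial ℚ)))) :
    (x^2 * y^2 - t^2 * (x + y)^2 * (1 + x*y)^2 - t * x * (1 + x^2) * y * (1 + y^2)) * FF 1
      = t * x * y * (x + y) * (1 + x*y)
        - t * x * y^2 * ev0 (FF 0)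
        - t * y * (x * (1 + y^2) + t * (x + y) * (1 + x*y)) * ev0 (FF 1) := by
  subst hx hy ht
  have hev0' : ev0 = PowerSeries.map phi0 := hev0
  subst hev0'
  have hrec := rec2 S0 hS0 S1 hS1 f hfneg hfrec
  have E0 := E0lem f hf0 hfneg hrec FF hFF
  have E1 := E1lem f hf0 hfneg hrec FF hFF
  have hxy : (PowerSeries.C (R := Polynomial (LaurentPolynomial ℚ)))
        (Polynomial.C (0 : LaurentPolynomial ℚ)
          + Polynomial.X * (Polynomial.C (T 1) + Polynomial.X * Polynomial.C 0))
      = PowerSeries.C Polynomial.X * PowerSeries.C (Polynomial.C (T 1)) := by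
    rw [show (Polynomial.C (0 : LaurentPolynomial ℚ)
          + Polynomial.X * (Polynomial.C (T 1) + Polynomial.X * Polynomial.C 0))
        = Polynomial.X * Polynomial.C (T 1) from by simp]
    rw [map_mul]
  have hK : (PowerSeries.C (R := Polynomial (LaurentPolynomial ℚ)))
        (Polynomial.C (T 1)
          + Polynomial.X * (Polynomial.C (1 + T 1 * T 1) + Polynomial.X * Polynomial.C (T 1)))
      = (PowerSeries.C Polynomial.X + PowerSeries.C (Polynomial.C (T 1)))
          * (1 + PowerSeries.C Polynomial.X * PowerSeries.C (Polynomial.C (T 1))) := by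
    rw [show (Polynomial.C (T 1)
          + Polynomial.X * (Polynomial.C (1 + T 1 * T 1) + Polynomial.X * Polynomial.C (T 1)))
        = (Polynomial.X + Polynomial.C (T 1)) * (1 + Polynomial.X * Polynomial.C (T 1)) from by
      simp only [map_add, map_mul, map_one, map_zero]; ring]
    simp only [map_mul, map_add, map_one]
  have hB : (PowerSeries.C (R := Polynomial (LaurentPolynomial ℚ)))
        (Polynomial.C (1 + T 1 * T 1)
          + Polynomial.X * (Polynomial.C (0 : LaurentPolynomial ℚ)
              + Polynomial.X * Polynomial.C (1 + T 1 * T 1)))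
      = (1 + (PowerSeries.C Polynomial.X)^2)
          * (1 + (PowerSeries.C (Polynomial.C (T 1)))^2) := by
    rw [show (Polynomial.C (1 + T 1 * T 1)
          + Polynomial.X * (Polynomial.C (0 : LaurentPolynomial ℚ)
              + Polynomial.X * Polynomial.C (1 + T 1 * T 1)))
        = (1 + Polynomial.X^2) * (1 + (Polynomial.C (T 1))^2) from by
      simp only [map_add, map_mul, map_one, map_zero]; ring]
    simp only [map_mul, map_add, map_one, map_pow]
  have hc2 : (PowerSeries.C (R := Polynomial (LaurentPolynomial ℚ))) (Polynomial.C (1 + T 1 * T 1))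
      = 1 + (PowerSeries.C (Polynomial.C (T 1)))^2 := by
    rw [show (Polynomial.C (1 + T 1 * T 1) : Polynomial (LaurentPolynomial ℚ))
        = 1 + (Polynomial.C (T 1))^2 from by
      simp only [map_add, map_mul, map_one, map_zero]; ring]
    simp only [map_add, map_one, map_pow]
  rw [hxy, hK] at E0
  rw [hxy, hK, hB, hc2] at E1
  linear_combination
    (PowerSeries.C (R := Polynomial (LaurentPolynomial ℚ)) Polynomial.X
      * PowerSeries.C (R := Polynomial (LaurentPolynomial ℚ)) (Polynomial.C (T 1))) * E1
    + PowerSeries.X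
      * ((PowerSeries.C (R := Polynomial (LaurentPolynomial ℚ)) Polynomial.X
            + PowerSeries.C (R := Polynomial (LaurentPolynomial ℚ)) (Polynomial.C (T 1)))
          * (1 + PowerSeries.C (R := Polynomial (LaurentPolynomial ℚ)) Polynomial.X
              * PowerSeries.C (R := Polynomial (LaurentPolynomial ℚ)) (Polynomial.C (T 1)))) * E0
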